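/- Under the hypotheses of the previous perturbation lemma (Û = U*Σ*W + E, R² = ÛᵀÛ, U = ÛR⁻¹), if σ_min(Σ*)·σ_min(W) > κ‖E‖₂ where κ = ‖Σ*‖₂/σ_min(Σ*) is the condition number of Σ*, then ‖(I − U*(U*)ᵀ)U‖₂ ≤ κ‖E‖₂ / (σ_min(Σ*)·σ_min(W) − κ‖E‖₂). -/

import Mathlib

open Matrix

/-- Spectral (operator) norm of a real matrix. -/
noncomputable def sNorm {n r : ℕ} (A : Matrix (Fin n) (Fin r) ℝ) : ℝ :=
  ‖(LinearMap.toContinuousLinearMap (Matrix.toEuclideanLin A))‖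

/-- Smallest singular value of a real matrix. -/
noncomputable def sMin {n r : ℕ} (A : Matrix (Fin n) (Fin r) ℝ) : ℝ :=
  ⨅ x : Metric.sphere (0 : EuclideanSpace ℝ (Fin r)) 1, ‖Matrix.toEuclideanLin A x‖

local notation "T" => Matrix.toEuclideanLin

lemma tel_mul {m n k : ℕ} (A : Matrix (Fin m) (Fin n) ℝ) (B : Matrix (Fin n) (Fin k) ℝ)
    (x : EuclideanSpace ℝ (Fin k)) :
    T (A * B) x = T A (T B x) := by
  simp [Matrix.toEuclideanLin_apply, Matrix.mulVec_mulVec]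

lemma tel_one {n : ℕ} (x : EuclideanSpace ℝ (Fin n)) : T (1 : Matrix (Fin n) (Fin n) ℝ) x = x := by
  simp [Matrix.toEuclideanLin_apply]

lemma inner_tel {m n : ℕ} (A : Matrix (Fin m) (Fin n) ℝ) (x : EuclideanSpace ℝ (Fin n))
    (y : EuclideanSpace ℝ (Fin m)) :
    (inner ℝ (T A x) y : ℝ) = inner ℝ x (T Aᵀ y) := by
  rw [← Matrix.conjTranspose_eq_transpose_of_trivial,
    Matrix.toEuclideanLin_conjTranspose_eq_adjoint, LinearMap.adjoint_inner_right]

lemma norm_apply_le {m n : ℕ} (A : Matrix (Fin m) (Fin n) ℝ) (x : EuclideanSpace ℝ (Fin n)) :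
    ‖T A x‖ ≤ sNorm A * ‖x‖ :=
  (LinearMap.toContinuousLinearMap (T A)).le_opNorm x

lemma sNorm_le' {m n : ℕ} (A : Matrix (Fin m) (Fin n) ℝ) {c : ℝ} (hc : 0 ≤ c)
    (h : ∀ x, ‖T A x‖ ≤ c * ‖x‖) : sNorm A ≤ c :=
  ContinuousLinearMap.opNorm_le_bound _ hc h

lemma sNorm_nonneg' {m n : ℕ} (A : Matrix (Fin m) (Fin n) ℝ) : 0 ≤ sNorm A :=
  norm_nonneg _

lemma sMin_nonneg' {m n : ℕ} (A : Matrix (Fin m) (Fin n) ℝ) : 0 ≤ sMin A :=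
  Real.iInf_nonneg fun _ => norm_nonneg _

lemma sMin_le_unit {m n : ℕ} (A : Matrix (Fin m) (Fin n) ℝ) {x : EuclideanSpace ℝ (Fin n)}
    (hx : ‖x‖ = 1) : sMin A ≤ ‖T A x‖ := by
  have hb : BddBelow (Set.range fun y : Metric.sphere (0 : EuclideanSpace ℝ (Fin n)) 1 =>
      ‖T A (y : EuclideanSpace ℝ (Fin n))‖) := ⟨0, by rintro z ⟨y, rfl⟩; exact norm_nonneg _⟩
  exact ciInf_le hb ⟨x, by simpa [mem_sphere_zero_iff_norm] using hx⟩

lemma sMin_mul_le {m n : ℕ} (A : Matrix (Fin m) (Fin n) ℝ) (x : EuclideanSpace ℝ (Fin n)) :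
    sMin A * ‖x‖ ≤ ‖T A x‖ := by
  rcases eq_or_ne x 0 with rfl | hx
  · simp
  · have hnx : ‖x‖ ≠ 0 := norm_ne_zero_iff.mpr hx
    have hu : ‖(‖x‖⁻¹ • x : EuclideanSpace ℝ (Fin n))‖ = 1 := by
      rw [norm_smul, norm_inv, norm_norm, inv_mul_cancel₀ hnx]
    have h := sMin_le_unit A hu
    rw [_root_.map_smul, norm_smul, norm_inv, norm_norm] at h
    have hpos : 0 < ‖x‖ := lt_of_le_of_ne (norm_nonneg x) (Ne.symm hnx)
    calc sMin A * ‖x‖ ≤ (‖x‖⁻¹ * ‖T A x‖) * ‖x‖ := by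
          exact mul_le_mul_of_nonneg_right h (norm_nonneg x)
      _ = ‖T A x‖ := by field_simp

lemma norm_tel_eq {m m' n : ℕ} (A : Matrix (Fin m) (Fin n) ℝ) (B : Matrix (Fin m') (Fin n) ℝ)
    (h : Aᵀ * A = Bᵀ * B) (x : EuclideanSpace ℝ (Fin n)) : ‖T A x‖ = ‖T B x‖ := by
  have h1 : (inner ℝ (T A x) (T A x) : ℝ) = inner ℝ (T B x) (T B x) := by
    rw [inner_tel, ← tel_mul, h, tel_mul, ← inner_tel]
  have h2 : ‖T A x‖ ^ 2 = ‖T B x‖ ^ 2 := by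
    rw [← real_inner_self_eq_norm_sq, ← real_inner_self_eq_norm_sq, h1]
  calc ‖T A x‖ = Real.sqrt (‖T A x‖ ^ 2) := (Real.sqrt_sq (norm_nonneg _)).symm
    _ = Real.sqrt (‖T B x‖ ^ 2) := by rw [h2]
    _ = ‖T B x‖ := Real.sqrt_sq (norm_nonneg _)

theorem stmt1 {n r : ℕ}
    (Ustar : Matrix (Fin n) (Fin r) ℝ) (S W : Matrix (Fin r) (Fin r) ℝ)
    (E : Matrix (Fin n) (Fin r) ℝ)
    (hUstar : Ustarᵀ * Ustar = 1)
    (hdiag : S.IsDiag) (hSinv : IsUnit S.det)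
    (Uhat : Matrix (Fin n) (Fin r) ℝ) (hUhat : Uhat = Ustar * S * W + E)
    (R : Matrix (Fin r) (Fin r) ℝ)
    (hRpsd : R.PosSemidef) (hR2 : R * R = Uhatᵀ * Uhat) (hRinv : IsUnit R.det)
    (U : Matrix (Fin n) (Fin r) ℝ) (hU : U = Uhat * R⁻¹)
    (κ : ℝ) (hκ : κ = sNorm S / sMin S)
    (hgap : κ * sNorm E < sMin S * sMin W) :
    sNorm ((1 - Ustar * Ustarᵀ) * U) ≤
      κ * sNorm E / (sMin S * sMin W - κ * sNorm E) := by
  have hκ0 : 0 ≤ κ := by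
    rw [hκ]; exact div_nonneg (sNorm_nonneg' S) (sMin_nonneg' S)
  have ha : 0 ≤ sNorm E := sNorm_nonneg' E
  have hprod : 0 < sMin S * sMin W :=
    lt_of_le_of_lt (mul_nonneg hκ0 ha) hgap
  -- r = 0 leads to a contradiction
  rcases Nat.eq_zero_or_pos r with hr | hr
  · subst hr
    have hemp : IsEmpty (Metric.sphere (0 : EuclideanSpace ℝ (Fin 0)) 1) := by
      constructor
      rintro ⟨x, hx⟩
      rw [mem_sphere_zero_iff_norm, Subsingleton.elim x 0, norm_zero] at hx
      exact one_ne_zero hx.symm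
    have : sMin W = 0 := by
      rw [sMin]; exact Real.iInf_of_isEmpty _
    rw [this, mul_zero] at hprod; exact absurd hprod (lt_irrefl 0)
  -- now r > 0
  have hs0 : 0 < sMin S := by
    rcases (sMin_nonneg' S).lt_or_eq with h | h
    · exact h
    · exfalso; rw [← h, zero_mul] at hprod; exact lt_irrefl 0 hprod
  have hw0 : 0 < sMin W := by
    rcases (sMin_nonneg' W).lt_or_eq with h | h
    · exact h
    · exfalso; rw [← h, mul_zero] at hprod; exact lt_irrefl 0 hprod
  -- κ ≥ 1
  have hκ1 : 1 ≤ κ := by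
    have he : ‖(EuclideanSpace.single (⟨0, hr⟩ : Fin r) (1 : ℝ) :
        EuclideanSpace ℝ (Fin r))‖ = 1 := by
      rw [EuclideanSpace.norm_single, norm_one]
    have h1 := sMin_le_unit S he
    have h2 := norm_apply_le S (EuclideanSpace.single (⟨0, hr⟩ : Fin r) (1 : ℝ))
    rw [he, mul_one] at h2
    rw [hκ]; rw [le_div_iff₀ hs0, one_mul]; linarith
  set a := sNorm E with ha_def
  set c := sMin S * sMin W - a with hc_def
  have hc0 : 0 < c := by nlinarith
  -- Uhat lower bound
  have hUhat' : Uhat = Ustar * (S * W) + E := by rw [hUhat, Matrix.mul_assoc]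
  have hUlow : ∀ y : EuclideanSpace ℝ (Fin r), c * ‖y‖ ≤ ‖T Uhat y‖ := by
    intro y
    have hsum : T Uhat y = T (Ustar * (S * W)) y + T E y := by
      rw [hUhat', map_add, LinearMap.add_apply]
    have h2 : ‖T (Ustar * (S * W)) y‖ = ‖T (S * W) y‖ := by
      refine norm_tel_eq _ _ ?_ y
      rw [Matrix.transpose_mul, Matrix.mul_assoc, ← Matrix.mul_assoc Ustarᵀ, hUstar,
        Matrix.one_mul]
    have h3 : sMin S * (sMin W * ‖y‖) ≤ ‖T (S * W) y‖ := by
      rw [tel_mul]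
      calc sMin S * (sMin W * ‖y‖) ≤ sMin S * ‖T W y‖ :=
            mul_le_mul_of_nonneg_left (sMin_mul_le W y) hs0.le
        _ ≤ ‖T S (T W y)‖ := sMin_mul_le S _
    have h4 : ‖T E y‖ ≤ a * ‖y‖ := norm_apply_le E y
    have h5 : ‖T (Ustar * (S * W)) y‖ ≤ ‖T Uhat y‖ + ‖T E y‖ := by
      calc ‖T (Ustar * (S * W)) y‖ = ‖T Uhat y - T E y‖ := by rw [hsum]; congr 1; abel
        _ ≤ ‖T Uhat y‖ + ‖T E y‖ := norm_sub_le _ _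
    have h6 : c * ‖y‖ = sMin S * (sMin W * ‖y‖) - a * ‖y‖ := by rw [hc_def]; ring
    linarith
  -- R⁻¹ bound
  have hRt : Rᵀ = R := by
    have h := hRpsd.1
    rwa [Matrix.IsHermitian, Matrix.conjTranspose_eq_transpose_of_trivial] at h
  have hRU : ∀ y, ‖T R y‖ = ‖T Uhat y‖ :=
    norm_tel_eq R Uhat (by rw [hRt, hR2])
  have hRinvB : ∀ x : EuclideanSpace ℝ (Fin r), ‖T R⁻¹ x‖ ≤ c⁻¹ * ‖x‖ := by
    intro x
    have h1 : c * ‖T R⁻¹ x‖ ≤ ‖T R (T R⁻¹ x)‖ := by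
      rw [hRU]; exact hUlow _
    have h2 : T R (T R⁻¹ x) = x := by
      rw [← tel_mul, Matrix.mul_nonsing_inv R hRinv, tel_one]
    rw [h2] at h1
    calc ‖T R⁻¹ x‖ = c⁻¹ * (c * ‖T R⁻¹ x‖) := by field_simp
      _ ≤ c⁻¹ * ‖x‖ := mul_le_mul_of_nonneg_left h1 (inv_nonneg.mpr hc0.le)
  -- projection identities
  have hAA : Ustar * Ustarᵀ * (Ustar * Ustarᵀ) = Ustar * Ustarᵀ := by
    calc Ustar * Ustarᵀ * (Ustar * Ustarᵀ) = Ustar * ((Ustarᵀ * Ustar) * Ustarᵀ) := by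
          simp only [Matrix.mul_assoc]
      _ = Ustar * Ustarᵀ := by rw [hUstar, Matrix.one_mul]
  have hPt : (1 - Ustar * Ustarᵀ)ᵀ = 1 - Ustar * Ustarᵀ := by
    rw [Matrix.transpose_sub, Matrix.transpose_one, Matrix.transpose_mul,
      Matrix.transpose_transpose]
  have hPP : (1 - Ustar * Ustarᵀ) * (1 - Ustar * Ustarᵀ) = 1 - Ustar * Ustarᵀ := by
    rw [Matrix.sub_mul, Matrix.one_mul, Matrix.mul_sub, Matrix.mul_one, hAA]
    abel
  have hcontr : ∀ v : EuclideanSpace ℝ (Fin n), ‖T (1 - Ustar * Ustarᵀ) v‖ ≤ ‖v‖ := by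
    intro v
    have h1 : ‖T (1 - Ustar * Ustarᵀ) v‖ ^ 2
        = inner ℝ v (T (1 - Ustar * Ustarᵀ) v) := by
      rw [← real_inner_self_eq_norm_sq, inner_tel, ← tel_mul, hPt, hPP]
    have h2 : (inner ℝ v (T (1 - Ustar * Ustarᵀ) v) : ℝ)
        ≤ ‖v‖ * ‖T (1 - Ustar * Ustarᵀ) v‖ := real_inner_le_norm _ _
    have h3 : ‖T (1 - Ustar * Ustarᵀ) v‖ * ‖T (1 - Ustar * Ustarᵀ) v‖
        ≤ ‖v‖ * ‖T (1 - Ustar * Ustarᵀ) v‖ := by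
      rw [← sq]; exact le_trans (le_of_eq h1) h2
    rcases (norm_nonneg (T (1 - Ustar * Ustarᵀ) v)).eq_or_lt with h0 | h0
    · rw [← h0]; exact norm_nonneg v
    · exact (mul_le_mul_iff_left₀ h0).mp h3
  -- key matrix identity
  have hPX : (1 - Ustar * Ustarᵀ) * (Ustar * S * W) = 0 := by
    have h0 : Ustar * Ustarᵀ * (Ustar * S * W) = Ustar * S * W := by
      calc Ustar * Ustarᵀ * (Ustar * S * W)
          = Ustar * ((Ustarᵀ * Ustar) * (S * W)) := by simp only [Matrix.mul_assoc]
        _ = Ustar * S * W := by rw [hUstar, Matrix.one_mul, Matrix.mul_assoc]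
    rw [Matrix.sub_mul, Matrix.one_mul, h0, sub_self]
  have hM : (1 - Ustar * Ustarᵀ) * U = ((1 - Ustar * Ustarᵀ) * E) * R⁻¹ := by
    rw [hU, hUhat, ← Matrix.mul_assoc, Matrix.mul_add, hPX, zero_add]
  -- final bound
  have hbound : sNorm ((1 - Ustar * Ustarᵀ) * U) ≤ a * c⁻¹ := by
    apply sNorm_le' _ (by positivity)
    intro x
    rw [hM]
    calc ‖T ((1 - Ustar * Ustarᵀ) * E * R⁻¹) x‖
        = ‖T (1 - Ustar * Ustarᵀ) (T E (T R⁻¹ x))‖ := by rw [tel_mul, tel_mul]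
      _ ≤ ‖T E (T R⁻¹ x)‖ := hcontr _
      _ ≤ a * ‖T R⁻¹ x‖ := norm_apply_le E _
      _ ≤ a * (c⁻¹ * ‖x‖) := mul_le_mul_of_nonneg_left (hRinvB x) ha
      _ = a * c⁻¹ * ‖x‖ := by ring
  have hd0 : 0 < sMin S * sMin W - κ * a := by linarith
  have harith : a * c⁻¹ ≤ κ * a / (sMin S * sMin W - κ * a) := by
    rw [show a * c⁻¹ = a / c from (div_eq_mul_inv a c).symm, div_le_div_iff₀ hc0 hd0]
    nlinarith [mul_nonneg (mul_nonneg (sub_nonneg.mpr hκ1) ha) hprod.le, hc_def]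
  exact le_trans hbound harith
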